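/- Let 2 ≤ p < 3 and let x, x̃ be solutions of x_{k+1} = x_k + Σ_μ f_μ(x_k)(w^μ_{k+1} − w^μ_k) driven by time series w and w̃ respectively, with f = (f_1, ..., f_d) of class C³_b. Define I_{k,l} := (x_l − x_k) − Σ_μ f_μ(x_k)(w^μ_l − w^μ_k), J^μ_{k,l} := f_μ(x_l) − f_μ(x_k) − Σ_ν Df_μ(x_k) f_ν(x_k)(w^ν_l − w^ν_k), and Ĩ, J̃^μ analogously for x̃, w̃. Then for all 0 ≤ k < l ≤ N: max_{μ=1,...,d} ||J^μ − J̃^μ||_{p/2;[k,l]} ≤ 2^{2−4/p} ||f||_{C³_b} { ||I − Ĩ||_{p/2;[k,l]} + ||x − x̃||_{∞;[0,l]} ( ||Ĩ||_{p/2;[k,l]} + ||x̃||²_{p;[k,l]} ) + ||x − x̃||_{p;[k,l]} ( ||x||_{p;[k,l]} + ||x̃||_{p;[k,l]} ) }, where ||y||_{∞;[0,l]} := max_{j=0,...,l} |y_j|. -/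

import Mathlib

noncomputable section

/-- `s` is an increasing subsequence (partition) of `{k, …, l}` from `k` to `l`. -/
def IsPart (k l : ℕ) (s : List ℕ) : Prop :=
  s.Chain' (· < ·) ∧ s.head? = some k ∧ s.getLast? = some l

/-- Supremum over partitions of the sums of `p`-th powers of increments of a triangular array. -/
def pVarSum {E : Type*} [NormedAddCommGroup E] (p : ℝ) (Ξ : ℕ → ℕ → E) (k l : ℕ) : ℝ :=
  sSup { x : ℝ | ∃ s : List ℕ, IsPart k l s ∧
    x = ((s.zip s.tail).map fun ab => ‖Ξ ab.1 ab.2‖ ^ p).sum }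

/-- The `p`-variation of a triangular array over `[k,l]`. -/
def pVar {E : Type*} [NormedAddCommGroup E] (p : ℝ) (Ξ : ℕ → ℕ → E) (k l : ℕ) : ℝ :=
  pVarSum p Ξ k l ^ (1 / p)

/-- The `p`-variation of a time series over `[k,l]`. -/
def pVarSeq {E : Type*} [NormedAddCommGroup E] (p : ℝ) (x : ℕ → E) (k l : ℕ) : ℝ :=
  pVar p (fun a b => x b - x a) k l

/-- A discrete control on `{0, …, N}`: nonnegative, vanishing on the diagonal, superadditive. -/
def IsControl (N : ℕ) (ω : ℕ → ℕ → ℝ) : Prop :=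
  (∀ k l, k ≤ l → l ≤ N → 0 ≤ ω k l) ∧
  (∀ k, k ≤ N → ω k k = 0) ∧
  (∀ k l m, k < l → l < m → m ≤ N → ω k l + ω l m ≤ ω k m)

/-- The `C³_b` norm of a family of vector fields: `max_μ max_{k=1,2,3} sup ‖D^k f_μ‖`. -/
def C3bNormF {d n : ℕ} (f : Fin d → (Fin n → ℝ) → (Fin n → ℝ)) : ℝ :=
  max (⨆ μ, ⨆ y, ‖iteratedFDeriv ℝ 1 (f μ) y‖)
    (max (⨆ μ, ⨆ y, ‖iteratedFDeriv ℝ 2 (f μ) y‖)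
      (⨆ μ, ⨆ y, ‖iteratedFDeriv ℝ 3 (f μ) y‖))

namespace RoughAux


lemma list_sum_zip (g : ℕ → ℕ → ℝ) : ∀ s : List ℕ,
    ((s.zip s.tail).map fun ab => g ab.1 ab.2).sum
      = ∑ i ∈ Finset.range (s.length - 1), g (s.getD i 0) (s.getD (i+1) 0) := by
  intro s
  induction s with
  | nil => simp
  | cons a t ih =>
    cases t with
    | nil => simp
    | cons b t' =>
      have hlen : (a :: b :: t').length - 1 = (b :: t').length - 1 + 1 := by
        simp
      rw [hlen, Finset.sum_range_succ']
      simp only [List.zip_cons_cons, List.tail_cons, List.map_cons, List.sum_cons] at ih ⊢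
      rw [ih, add_comm]
      rfl

lemma nat_step_mono {g : ℕ → ℕ} {m : ℕ} (h : ∀ i < m, g i < g (i+1)) :
    ∀ j ≤ m, ∀ i ≤ j, g i + (j - i) ≤ g j := by
  intro j
  induction j with
  | zero => intro _ i hi; interval_cases i; simp
  | succ j ihj =>
    intro hjm i hij
    rcases Nat.lt_or_ge i (j+1) with hlt | hge
    · have hi : i ≤ j := Nat.lt_succ_iff.mp hlt
      have h1 := ihj (le_trans (Nat.le_succ j) hjm) i hi
      have h2 := h j (by omega)
      omega
    · have : i = j + 1 := le_antisymm hij hge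
      subst this; simp

/-- Data extracted from a partition. -/
lemma isPart_facts {k l : ℕ} {s : List ℕ} (hs : IsPart k l s) :
    s.getD 0 0 = k ∧ s.getD (s.length - 1) 0 = l ∧
      (∀ i < s.length - 1, s.getD i 0 < s.getD (i+1) 0) ∧
      k + (s.length - 1) ≤ l := by
  obtain ⟨hc, hh, hl⟩ := hs
  have hne : s ≠ [] := by rintro rfl; simp at hh
  have h0 : s.getD 0 0 = k := by
    cases s with
    | nil => simp at hh
    | cons a t => simpa using hh
  have hlen1 : 1 ≤ s.length := by
    cases s with
    | nil => exact absurd rfl hne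
    | cons a t => simp
  have hm : s.length - 1 < s.length := by omega
  have hlast : s.getD (s.length - 1) 0 = l := by
    rw [List.getD_eq_getElem _ _ hm]
    rw [List.getLast?_eq_getLast hne] at hl
    have := List.getLast_eq_getElem (l := s) hne
    rw [this] at hl
    exact Option.some_injective _ hl
  have hstep : ∀ i < s.length - 1, s.getD i 0 < s.getD (i+1) 0 := by
    intro i hi
    have h := List.isChain_iff_getElem.mp hc i (by omega)
    rw [List.getD_eq_getElem _ _ (by omega : i < s.length),
      List.getD_eq_getElem _ _ (by omega : i + 1 < s.length)]
    exact h
  have hkl : k + (s.length - 1) ≤ l := by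
    have := nat_step_mono hstep (s.length - 1) le_rfl 0 (Nat.zero_le _)
    omega
  exact ⟨h0, hlast, hstep, hkl⟩


variable {E : Type*} [NormedAddCommGroup E]

lemma pSet_nonneg {p : ℝ} {Ξ : ℕ → ℕ → E} {k l : ℕ} {y : ℝ}
    (hy : y ∈ { x : ℝ | ∃ s : List ℕ, IsPart k l s ∧
      x = ((s.zip s.tail).map fun ab => ‖Ξ ab.1 ab.2‖ ^ p).sum }) : 0 ≤ y := by
  obtain ⟨s, _, rfl⟩ := hy
  apply List.sum_nonneg
  intro z hz
  obtain ⟨ab, _, rfl⟩ := List.mem_map.mp hz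
  exact Real.rpow_nonneg (norm_nonneg _) _

lemma list_sum_zip' (Ξ : ℕ → ℕ → E) (p : ℝ) (s : List ℕ) :
    ((s.zip s.tail).map fun ab : ℕ × ℕ => ‖Ξ ab.1 ab.2‖ ^ p).sum
      = ∑ i ∈ Finset.range (s.length - 1), ‖Ξ (s.getD i 0) (s.getD (i+1) 0)‖ ^ p :=
  list_sum_zip (fun a b => ‖Ξ a b‖ ^ p) s

lemma pVarSum_nonneg (p : ℝ) (Ξ : ℕ → ℕ → E) (k l : ℕ) : 0 ≤ pVarSum p Ξ k l :=
  Real.sSup_nonneg fun _ hy => pSet_nonneg hy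

lemma bddAbove_pSet (p : ℝ) (Ξ : ℕ → ℕ → E) (k l : ℕ) :
    BddAbove { x : ℝ | ∃ s : List ℕ, IsPart k l s ∧
      x = ((s.zip s.tail).map fun ab => ‖Ξ ab.1 ab.2‖ ^ p).sum } := by
  classical
  set B : ℝ := (Finset.Icc 0 l ×ˢ Finset.Icc 0 l).sup' ⟨(0,0), by simp⟩
    (fun ab => ‖Ξ ab.1 ab.2‖ ^ p) with hBdef
  have hB0 : (0:ℝ) ≤ B := le_trans (Real.rpow_nonneg (norm_nonneg _) _)
    (Finset.le_sup' (f := fun ab => ‖Ξ ab.1 ab.2‖ ^ p) (by simp : ((0:ℕ),(0:ℕ)) ∈ _))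
  refine ⟨(l : ℝ) * B, ?_⟩
  rintro x ⟨s, hs, rfl⟩
  obtain ⟨h0, hm, hstep, hkl⟩ := isPart_facts hs
  rw [list_sum_zip']
  set m := s.length - 1 with hmdef
  have hmono := nat_step_mono hstep
  have hle : ∀ i ≤ m, s.getD i 0 ≤ l := by
    intro i hi
    have := hmono m le_rfl i hi
    omega
  have hterm : ∀ i ∈ Finset.range m, ‖Ξ (s.getD i 0) (s.getD (i+1) 0)‖ ^ p ≤ B := by
    intro i hi
    rw [Finset.mem_range] at hi
    rw [hBdef]
    refine Finset.le_sup' (f := fun ab : ℕ × ℕ => ‖Ξ ab.1 ab.2‖ ^ p)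
      (b := (s.getD i 0, s.getD (i+1) 0)) ?_
    simp only [Finset.mem_product, Finset.mem_Icc]
    exact ⟨⟨Nat.zero_le _, hle i (by omega)⟩, ⟨Nat.zero_le _, hle (i+1) (by omega)⟩⟩
  calc ∑ i ∈ Finset.range m, ‖Ξ (s.getD i 0) (s.getD (i+1) 0)‖ ^ p
      ≤ (Finset.range m).card • B := Finset.sum_le_card_nsmul _ _ _ hterm
    _ = (m : ℝ) * B := by rw [Finset.card_range, nsmul_eq_mul]
    _ ≤ (l : ℝ) * B := by
        apply mul_le_mul_of_nonneg_right _ hB0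
        exact_mod_cast (by omega : m ≤ l)

lemma le_pVarSum {p : ℝ} {Ξ : ℕ → ℕ → E} {k l : ℕ} {s : List ℕ} (hs : IsPart k l s) :
    ∑ i ∈ Finset.range (s.length - 1), ‖Ξ (s.getD i 0) (s.getD (i+1) 0)‖ ^ p
      ≤ pVarSum p Ξ k l := by
  apply le_csSup (bddAbove_pSet p Ξ k l)
  exact ⟨s, hs, (list_sum_zip' Ξ p s).symm⟩

lemma pVarSum_le {p : ℝ} {Ξ : ℕ → ℕ → E} {k l : ℕ} {C : ℝ} (hC : 0 ≤ C)
    (h : ∀ s : List ℕ, IsPart k l s →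
      ∑ i ∈ Finset.range (s.length - 1), ‖Ξ (s.getD i 0) (s.getD (i+1) 0)‖ ^ p ≤ C) :
    pVarSum p Ξ k l ≤ C := by
  apply Real.sSup_le _ hC
  rintro x ⟨s, hs, rfl⟩
  rw [list_sum_zip']
  exact h s hs

lemma pVar_nonneg (p : ℝ) (Ξ : ℕ → ℕ → E) (k l : ℕ) : 0 ≤ pVar p Ξ k l :=
  Real.rpow_nonneg (pVarSum_nonneg p Ξ k l) _

lemma sum_rpow_le_pVar {p : ℝ} (hp : 0 < p) {Ξ : ℕ → ℕ → E} {k l : ℕ} {s : List ℕ}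
    (hs : IsPart k l s) :
    (∑ i ∈ Finset.range (s.length - 1), ‖Ξ (s.getD i 0) (s.getD (i+1) 0)‖ ^ p) ^ (1/p)
      ≤ pVar p Ξ k l :=
  Real.rpow_le_rpow (Finset.sum_nonneg fun _ _ => Real.rpow_nonneg (norm_nonneg _) _)
    (le_pVarSum hs) (by positivity)

lemma pVar_le {p : ℝ} (hp : 0 < p) {Ξ : ℕ → ℕ → E} {k l : ℕ} {C : ℝ} (hC : 0 ≤ C)
    (h : ∀ s : List ℕ, IsPart k l s →
      ∑ i ∈ Finset.range (s.length - 1), ‖Ξ (s.getD i 0) (s.getD (i+1) 0)‖ ^ p ≤ C ^ p) :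
    pVar p Ξ k l ≤ C := by
  have h1 : pVarSum p Ξ k l ≤ C ^ p := pVarSum_le (Real.rpow_nonneg hC p) h
  calc pVar p Ξ k l = pVarSum p Ξ k l ^ (1/p) := rfl
    _ ≤ (C ^ p) ^ (1/p) := Real.rpow_le_rpow (pVarSum_nonneg p Ξ k l) h1 (by positivity)
    _ = C := by
        rw [← Real.rpow_mul hC, mul_one_div, div_self (ne_of_gt hp), Real.rpow_one]


section Calc
variable {E : Type*} [NormedAddCommGroup E] [NormedSpace ℝ E]
variable {F : E → E} {K : ℝ}

lemma fderiv_lip (hF : ContDiff ℝ 3 F)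
    (h2 : ∀ y, ‖fderiv ℝ (fderiv ℝ F) y‖ ≤ K) (y z : E) :
    ‖fderiv ℝ F y - fderiv ℝ F z‖ ≤ K * ‖y - z‖ := by
  have hd2 : ContDiff ℝ 2 (fderiv ℝ F) := hF.fderiv_right (m := 2) (by norm_num)
  have hd : ∀ c : E, DifferentiableAt ℝ (fderiv ℝ F) c := fun c =>
    (hd2.differentiable (by norm_num)).differentiableAt
  exact Convex.norm_image_sub_le_of_norm_fderiv_le (fun c _ => hd c) (fun c _ => h2 c)
    convex_univ trivial trivial

lemma fderiv2_lip (hF : ContDiff ℝ 3 F)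
    (h3 : ∀ y, ‖fderiv ℝ (fderiv ℝ (fderiv ℝ F)) y‖ ≤ K) (y z : E) :
    ‖fderiv ℝ (fderiv ℝ F) y - fderiv ℝ (fderiv ℝ F) z‖ ≤ K * ‖y - z‖ := by
  have hd2 : ContDiff ℝ 2 (fderiv ℝ F) := hF.fderiv_right (m := 2) (by norm_num)
  have hd1 : ContDiff ℝ 1 (fderiv ℝ (fderiv ℝ F)) := hd2.fderiv_right (m := 1) (by norm_num)
  have hd : ∀ c : E, DifferentiableAt ℝ (fderiv ℝ (fderiv ℝ F)) c := fun c =>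
    (hd1.differentiable (by norm_num)).differentiableAt
  exact Convex.norm_image_sub_le_of_norm_fderiv_le (fun c _ => hd c) (fun c _ => h3 c)
    convex_univ trivial trivial
end Calc


section Calc2
variable {E : Type*} [NormedAddCommGroup E] [NormedSpace ℝ E]
variable {F : E → E} {K : ℝ}

lemma convex_norm_combo {u v : E} {M : ℝ} (hu : ‖u‖ ≤ M) (hv : ‖v‖ ≤ M) {t : ℝ}
    (ht0 : 0 ≤ t) (ht1 : t ≤ 1) : ‖(1 - t) • u + t • v‖ ≤ M := by
  calc ‖(1 - t) • u + t • v‖ ≤ ‖(1 - t) • u‖ + ‖t • v‖ := norm_add_le _ _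
    _ = (1 - t) * ‖u‖ + t * ‖v‖ := by
        rw [norm_smul, norm_smul, Real.norm_eq_abs, Real.norm_eq_abs,
          abs_of_nonneg (by linarith), abs_of_nonneg ht0]
    _ ≤ (1 - t) * M + t * M := by
        have h1t : (0:ℝ) ≤ 1 - t := by linarith
        exact add_le_add (mul_le_mul_of_nonneg_left hu h1t)
          (mul_le_mul_of_nonneg_left hv ht0)
    _ = M := by ring

lemma fderiv_four_point (hF : ContDiff ℝ 3 F)
    (h2 : ∀ y, ‖fderiv ℝ (fderiv ℝ F) y‖ ≤ K)
    (h3 : ∀ y, ‖fderiv ℝ (fderiv ℝ (fderiv ℝ F)) y‖ ≤ K)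
    (c₀ c₁ c₀' c₁' : E) {M : ℝ} (hM0 : ‖c₀ - c₀'‖ ≤ M) (hM1 : ‖c₁ - c₁'‖ ≤ M) :
    ‖(fderiv ℝ F c₁ - fderiv ℝ F c₀) - (fderiv ℝ F c₁' - fderiv ℝ F c₀')‖ ≤
      K * ‖(c₁ - c₀) - (c₁' - c₀')‖ + K * M * ‖c₁' - c₀'‖ := by
  have hd2 : ContDiff ℝ 2 (fderiv ℝ F) := hF.fderiv_right (m := 2) (by norm_num)
  have hdF : ∀ c : E, DifferentiableAt ℝ (fderiv ℝ F) c := fun c =>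
    (hd2.differentiable (by norm_num)).differentiableAt
  set k : E := c₁ - c₀ with hk
  set k' : E := c₁' - c₀' with hk'
  set D2 := fderiv ℝ (fderiv ℝ F) with hD2
  set G : ℝ → (E →L[ℝ] E) := fun v => fderiv ℝ F (c₀ + v • k) - fderiv ℝ F (c₀' + v • k')
    with hG
  have hderiv : ∀ v ∈ Set.Icc (0:ℝ) 1, HasDerivWithinAt G
      (D2 (c₀ + v • k) k - D2 (c₀' + v • k') k') (Set.Icc 0 1) v := by
    intro v _
    have p1 : HasDerivAt (fun v : ℝ => c₀ + v • k) k v := by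
      simpa using ((hasDerivAt_id v).smul_const k).const_add c₀
    have p2 : HasDerivAt (fun v : ℝ => c₀' + v • k') k' v := by
      simpa using ((hasDerivAt_id v).smul_const k').const_add c₀'
    have q1 : HasDerivAt (fun v : ℝ => fderiv ℝ F (c₀ + v • k)) (D2 (c₀ + v • k) k) v :=
      (hdF _).hasFDerivAt.comp_hasDerivAt v p1
    have q2 : HasDerivAt (fun v : ℝ => fderiv ℝ F (c₀' + v • k')) (D2 (c₀' + v • k') k') v :=
      (hdF _).hasFDerivAt.comp_hasDerivAt v p2
    exact (q1.sub q2).hasDerivWithinAt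
  have hbound : ∀ v ∈ Set.Ico (0:ℝ) 1,
      ‖D2 (c₀ + v • k) k - D2 (c₀' + v • k') k'‖ ≤ K * ‖k - k'‖ + K * M * ‖k'‖ := by
    intro v hv
    have hsplit : D2 (c₀ + v • k) k - D2 (c₀' + v • k') k'
        = D2 (c₀ + v • k) (k - k') + (D2 (c₀ + v • k) - D2 (c₀' + v • k')) k' := by
      simp only [map_sub, ContinuousLinearMap.sub_apply]
      abel
    rw [hsplit]
    have hz : ‖(c₀ + v • k) - (c₀' + v • k')‖ ≤ M := by
      have : (c₀ + v • k) - (c₀' + v • k') = (1 - v) • (c₀ - c₀') + v • (c₁ - c₁') := by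
        rw [hk, hk']
        module
      rw [this]
      exact convex_norm_combo hM0 hM1 hv.1 (le_of_lt hv.2)
    calc ‖D2 (c₀ + v • k) (k - k') + (D2 (c₀ + v • k) - D2 (c₀' + v • k')) k'‖
        ≤ ‖D2 (c₀ + v • k) (k - k')‖ + ‖(D2 (c₀ + v • k) - D2 (c₀' + v • k')) k'‖ :=
          norm_add_le _ _
      _ ≤ ‖D2 (c₀ + v • k)‖ * ‖k - k'‖ + ‖D2 (c₀ + v • k) - D2 (c₀' + v • k')‖ * ‖k'‖ :=
          add_le_add (ContinuousLinearMap.le_opNorm _ _) (ContinuousLinearMap.le_opNorm _ _)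
      _ ≤ K * ‖k - k'‖ + K * M * ‖k'‖ := by
          have hK : 0 ≤ K := le_trans (norm_nonneg _) (h2 c₀)
          have b1 : ‖D2 (c₀ + v • k)‖ * ‖k - k'‖ ≤ K * ‖k - k'‖ :=
            mul_le_mul_of_nonneg_right (h2 _) (norm_nonneg _)
          have b2 : ‖D2 (c₀ + v • k) - D2 (c₀' + v • k')‖ * ‖k'‖ ≤ (K * M) * ‖k'‖ :=
            mul_le_mul_of_nonneg_right
              (le_trans (fderiv2_lip hF h3 _ _) (mul_le_mul_of_nonneg_left hz hK))
              (norm_nonneg _)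
          linarith
  have := norm_image_sub_le_of_norm_deriv_le_segment' hderiv hbound 1
    (Set.right_mem_Icc.mpr zero_le_one)
  simp only [hG] at this
  have e1 : c₀ + (1:ℝ) • k = c₁ := by rw [one_smul, hk]; abel
  have e0 : c₀ + (0:ℝ) • k = c₀ := by rw [zero_smul, add_zero]
  have e1' : c₀' + (1:ℝ) • k' = c₁' := by rw [one_smul, hk']; abel
  have e0' : c₀' + (0:ℝ) • k' = c₀' := by rw [zero_smul, add_zero]
  rw [e1, e0, e1', e0'] at this
  calc ‖(fderiv ℝ F c₁ - fderiv ℝ F c₀) - (fderiv ℝ F c₁' - fderiv ℝ F c₀')‖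
      = ‖(fderiv ℝ F c₁ - fderiv ℝ F c₁') - (fderiv ℝ F c₀ - fderiv ℝ F c₀')‖ := by
        congr 1; abel
    _ ≤ (K * ‖k - k'‖ + K * M * ‖k'‖) * (1 - 0) := this
    _ = K * ‖(c₁ - c₀) - (c₁' - c₀')‖ + K * M * ‖c₁' - c₀'‖ := by rw [hk, hk']; ring
end Calc2


section Calc3
variable {E : Type*} [NormedAddCommGroup E] [NormedSpace ℝ E]
variable {F : E → E} {K : ℝ}

lemma taylor_two_diff (hF : ContDiff ℝ 3 F)
    (h2 : ∀ y, ‖fderiv ℝ (fderiv ℝ F) y‖ ≤ K)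
    (h3 : ∀ y, ‖fderiv ℝ (fderiv ℝ (fderiv ℝ F)) y‖ ≤ K)
    (a b a' b' : E) {M : ℝ} (hMa : ‖a - a'‖ ≤ M) (hMb : ‖b - b'‖ ≤ M) :
    ‖(F b - F a - fderiv ℝ F a (b - a)) - (F b' - F a' - fderiv ℝ F a' (b' - a'))‖ ≤
      K * (‖(b - a) - (b' - a')‖ * (‖b - a‖ + ‖b' - a'‖)) + K * M * (‖b' - a'‖ * ‖b' - a'‖) := by
  have hK : 0 ≤ K := le_trans (norm_nonneg _) (h2 a)
  have hdF : ∀ c : E, DifferentiableAt ℝ F c :=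
    fun c => (hF.differentiable (by norm_num)).differentiableAt
  set h : E := b - a with hh
  set h' : E := b' - a' with hh'
  set L : E := fderiv ℝ F a h - fderiv ℝ F a' h' with hL
  set ψ : ℝ → E := fun v => F (a + v • h) - F (a' + v • h') - v • L with hψ
  have hderiv : ∀ v ∈ Set.Icc (0:ℝ) 1, HasDerivWithinAt ψ
      (fderiv ℝ F (a + v • h) h - fderiv ℝ F (a' + v • h') h' - L) (Set.Icc 0 1) v := by
    intro v _
    have p1 : HasDerivAt (fun v : ℝ => a + v • h) h v := by
      simpa using ((hasDerivAt_id v).smul_const h).const_add a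
    have p2 : HasDerivAt (fun v : ℝ => a' + v • h') h' v := by
      simpa using ((hasDerivAt_id v).smul_const h').const_add a'
    have q1 : HasDerivAt (fun v : ℝ => F (a + v • h)) (fderiv ℝ F (a + v • h) h) v :=
      (hdF _).hasFDerivAt.comp_hasDerivAt v p1
    have q2 : HasDerivAt (fun v : ℝ => F (a' + v • h')) (fderiv ℝ F (a' + v • h') h') v :=
      (hdF _).hasFDerivAt.comp_hasDerivAt v p2
    have q3 : HasDerivAt (fun v : ℝ => v • L) L v := by
      simpa using (hasDerivAt_id v).smul_const L
    exact ((q1.sub q2).sub q3).hasDerivWithinAt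
  have hbound : ∀ v ∈ Set.Ico (0:ℝ) 1,
      ‖fderiv ℝ F (a + v • h) h - fderiv ℝ F (a' + v • h') h' - L‖ ≤
        K * (‖h - h'‖ * (‖h‖ + ‖h'‖)) + K * M * (‖h'‖ * ‖h'‖) := by
    intro v hv
    have hv0 := hv.1
    have hv1 := le_of_lt hv.2
    have hsplit : fderiv ℝ F (a + v • h) h - fderiv ℝ F (a' + v • h') h' - L
        = (fderiv ℝ F (a + v • h) - fderiv ℝ F a) (h - h')
          + ((fderiv ℝ F (a + v • h) - fderiv ℝ F a)
              - (fderiv ℝ F (a' + v • h') - fderiv ℝ F a')) h' := by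
      rw [hL]
      simp only [ContinuousLinearMap.sub_apply, map_sub]
      abel
    rw [hsplit]
    have hX : ‖(fderiv ℝ F (a + v • h) - fderiv ℝ F a) (h - h')‖ ≤ K * ‖h‖ * ‖h - h'‖ := by
      calc ‖(fderiv ℝ F (a + v • h) - fderiv ℝ F a) (h - h')‖
          ≤ ‖fderiv ℝ F (a + v • h) - fderiv ℝ F a‖ * ‖h - h'‖ :=
            ContinuousLinearMap.le_opNorm _ _
        _ ≤ (K * ‖(a + v • h) - a‖) * ‖h - h'‖ :=
            mul_le_mul_of_nonneg_right (fderiv_lip hF h2 _ _) (norm_nonneg _)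
        _ ≤ K * ‖h‖ * ‖h - h'‖ := by
            have : ‖(a + v • h) - a‖ = v * ‖h‖ := by
              rw [add_sub_cancel_left, norm_smul, Real.norm_eq_abs, abs_of_nonneg hv0]
            rw [this]
            have : K * (v * ‖h‖) ≤ K * ‖h‖ := by
              have := mul_le_of_le_one_left (norm_nonneg h) hv1
              exact mul_le_mul_of_nonneg_left this hK
            exact mul_le_mul_of_nonneg_right this (norm_nonneg _)
    have hMmid : ‖(a + v • h) - (a' + v • h')‖ ≤ M := by
      have : (a + v • h) - (a' + v • h') = (1 - v) • (a - a') + v • (b - b') := by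
        rw [hh, hh']; module
      rw [this]
      exact convex_norm_combo hMa hMb hv0 hv1
    have hY : ‖((fderiv ℝ F (a + v • h) - fderiv ℝ F a)
        - (fderiv ℝ F (a' + v • h') - fderiv ℝ F a')) h'‖
        ≤ (K * ‖h - h'‖ + K * M * ‖h'‖) * ‖h'‖ := by
      have hop := fderiv_four_point hF h2 h3 a (a + v • h) a' (a' + v • h')
        (M := M) hMa hMmid
      have e1 : (a + v • h) - a = v • h := by abel
      have e2 : (a' + v • h') - a' = v • h' := by abel
      rw [e1, e2] at hop
      have hop2 : ‖(fderiv ℝ F (a + v • h) - fderiv ℝ F a)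
          - (fderiv ℝ F (a' + v • h') - fderiv ℝ F a')‖ ≤ K * ‖h - h'‖ + K * M * ‖h'‖ := by
        refine le_trans hop ?_
        have e3 : v • h - v • h' = v • (h - h') := (smul_sub v h h').symm
        rw [e3]
        have n1 : ‖v • (h - h')‖ ≤ ‖h - h'‖ := by
          rw [norm_smul, Real.norm_eq_abs, abs_of_nonneg hv0]
          exact mul_le_of_le_one_left (norm_nonneg _) hv1
        have n2 : ‖v • h'‖ ≤ ‖h'‖ := by
          rw [norm_smul, Real.norm_eq_abs, abs_of_nonneg hv0]
          exact mul_le_of_le_one_left (norm_nonneg _) hv1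
        have hKM : 0 ≤ K * M := mul_nonneg hK (le_trans (norm_nonneg _) hMa)
        exact add_le_add (mul_le_mul_of_nonneg_left n1 hK)
          (mul_le_mul_of_nonneg_left n2 hKM)
      calc ‖((fderiv ℝ F (a + v • h) - fderiv ℝ F a)
            - (fderiv ℝ F (a' + v • h') - fderiv ℝ F a')) h'‖
          ≤ ‖(fderiv ℝ F (a + v • h) - fderiv ℝ F a)
            - (fderiv ℝ F (a' + v • h') - fderiv ℝ F a')‖ * ‖h'‖ :=
            ContinuousLinearMap.le_opNorm _ _
        _ ≤ (K * ‖h - h'‖ + K * M * ‖h'‖) * ‖h'‖ :=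
            mul_le_mul_of_nonneg_right hop2 (norm_nonneg _)
    calc ‖(fderiv ℝ F (a + v • h) - fderiv ℝ F a) (h - h')
          + ((fderiv ℝ F (a + v • h) - fderiv ℝ F a)
            - (fderiv ℝ F (a' + v • h') - fderiv ℝ F a')) h'‖
        ≤ ‖(fderiv ℝ F (a + v • h) - fderiv ℝ F a) (h - h')‖
          + ‖((fderiv ℝ F (a + v • h) - fderiv ℝ F a)
            - (fderiv ℝ F (a' + v • h') - fderiv ℝ F a')) h'‖ := norm_add_le _ _
      _ ≤ K * ‖h‖ * ‖h - h'‖ + (K * ‖h - h'‖ + K * M * ‖h'‖) * ‖h'‖ := add_le_add hX hY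
      _ = K * (‖h - h'‖ * (‖h‖ + ‖h'‖)) + K * M * (‖h'‖ * ‖h'‖) := by ring
  have hmvt := norm_image_sub_le_of_norm_deriv_le_segment' hderiv hbound 1
    (Set.right_mem_Icc.mpr zero_le_one)
  have eψ1 : ψ 1 = F b - F b' - L := by
    simp only [hψ, one_smul]
    have e1 : a + h = b := by rw [hh]; abel
    have e2 : a' + h' = b' := by rw [hh']; abel
    rw [e1, e2]
  have eψ0 : ψ 0 = F a - F a' := by simp [hψ]
  rw [eψ1, eψ0] at hmvt
  calc ‖(F b - F a - fderiv ℝ F a (b - a)) - (F b' - F a' - fderiv ℝ F a' (b' - a'))‖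
      = ‖F b - F b' - L - (F a - F a')‖ := by rw [hL, hh, hh']; congr 1; abel
    _ ≤ (K * (‖h - h'‖ * (‖h‖ + ‖h'‖)) + K * M * (‖h'‖ * ‖h'‖)) * (1 - 0) := hmvt
    _ = K * (‖(b - a) - (b' - a')‖ * (‖b - a‖ + ‖b' - a'‖))
        + K * M * (‖b' - a'‖ * ‖b' - a'‖) := by rw [hh, hh']; ring
end Calc3


section MeanIneq
variable {ι : Type*}

lemma Lp_add_le_of_nonneg {q : ℝ} (hq : 1 ≤ q) (s : Finset ι) (f g : ι → ℝ)
    (hf : ∀ i ∈ s, 0 ≤ f i) (hg : ∀ i ∈ s, 0 ≤ g i) :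
    (∑ i ∈ s, (f i + g i) ^ q) ^ (1/q) ≤
      (∑ i ∈ s, f i ^ q) ^ (1/q) + (∑ i ∈ s, g i ^ q) ^ (1/q) := by
  have := Real.Lp_add_le s f g hq
  have e1 : ∑ i ∈ s, |f i + g i| ^ q = ∑ i ∈ s, (f i + g i) ^ q :=
    Finset.sum_congr rfl fun i hi => by rw [abs_of_nonneg (add_nonneg (hf i hi) (hg i hi))]
  have e2 : ∑ i ∈ s, |f i| ^ q = ∑ i ∈ s, f i ^ q :=
    Finset.sum_congr rfl fun i hi => by rw [abs_of_nonneg (hf i hi)]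
  have e3 : ∑ i ∈ s, |g i| ^ q = ∑ i ∈ s, g i ^ q :=
    Finset.sum_congr rfl fun i hi => by rw [abs_of_nonneg (hg i hi)]
  rwa [e1, e2, e3] at this

lemma rpow_one_div_le_iff {q A B : ℝ} (hq : 0 < q) (hA : 0 ≤ A) (hB : 0 ≤ B)
    (h : A ^ (1/q) ≤ B) : A ≤ B ^ q := by
  have := Real.rpow_le_rpow (Real.rpow_nonneg hA _) h (le_of_lt hq)
  rwa [← Real.rpow_mul hA, one_div_mul_cancel (ne_of_gt hq), Real.rpow_one] at this

lemma sum_add_rpow_le {q : ℝ} (hq : 1 ≤ q) (s : Finset ι) (f g : ι → ℝ)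
    (hf : ∀ i ∈ s, 0 ≤ f i) (hg : ∀ i ∈ s, 0 ≤ g i) :
    ∑ i ∈ s, (f i + g i) ^ q ≤
      ((∑ i ∈ s, f i ^ q) ^ (1/q) + (∑ i ∈ s, g i ^ q) ^ (1/q)) ^ q :=
  rpow_one_div_le_iff (by linarith)
    (Finset.sum_nonneg fun i hi => Real.rpow_nonneg (add_nonneg (hf i hi) (hg i hi)) _)
    (add_nonneg (Real.rpow_nonneg (Finset.sum_nonneg fun i hi =>
        Real.rpow_nonneg (hf i hi) _) _)
      (Real.rpow_nonneg (Finset.sum_nonneg fun i hi => Real.rpow_nonneg (hg i hi) _) _))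
    (Lp_add_le_of_nonneg hq s f g hf hg)

lemma cauchy_schwarz_sum {s : Finset ι} {u v : ι → ℝ} (hu : ∀ i ∈ s, 0 ≤ u i)
    (hv : ∀ i ∈ s, 0 ≤ v i) :
    ∑ i ∈ s, u i * v i ≤ Real.sqrt (∑ i ∈ s, u i ^ (2:ℕ)) * Real.sqrt (∑ i ∈ s, v i ^ (2:ℕ)) := by
  have hcs := Finset.sum_mul_sq_le_sq_mul_sq s u v
  have h0 : 0 ≤ ∑ i ∈ s, u i * v i :=
    Finset.sum_nonneg fun i hi => mul_nonneg (hu i hi) (hv i hi)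
  calc ∑ i ∈ s, u i * v i = Real.sqrt ((∑ i ∈ s, u i * v i) ^ (2:ℕ)) :=
        (Real.sqrt_sq h0).symm
    _ ≤ Real.sqrt ((∑ i ∈ s, u i ^ (2:ℕ)) * ∑ i ∈ s, v i ^ (2:ℕ)) := Real.sqrt_le_sqrt hcs
    _ = Real.sqrt (∑ i ∈ s, u i ^ (2:ℕ)) * Real.sqrt (∑ i ∈ s, v i ^ (2:ℕ)) :=
        Real.sqrt_mul (Finset.sum_nonneg fun i _ => sq_nonneg _) _
end MeanIneq


noncomputable instance normCLM3 {E' E'' : Type*} [NormedAddCommGroup E'] [NormedSpace ℝ E']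
    [NormedAddCommGroup E''] [NormedSpace ℝ E''] : Norm (E' →L[ℝ] E' →L[ℝ] E' →L[ℝ] E'') :=
  @ContinuousLinearMap.hasOpNorm ℝ ℝ E' (E' →L[ℝ] E' →L[ℝ] E'') _ _ _ _ _ _ (RingHom.id ℝ)

section NormEq
variable {E' : Type*} [NormedAddCommGroup E'] [NormedSpace ℝ E']
variable {E'' : Type*} [NormedAddCommGroup E''] [NormedSpace ℝ E'']

lemma norm_fderiv_eq1 (F : E' → E'') (y : E') :
    ‖fderiv ℝ F y‖ = ‖iteratedFDeriv ℝ 1 F y‖ :=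
  calc ‖fderiv ℝ F y‖ = ‖iteratedFDeriv ℝ 0 (fderiv ℝ F) y‖ := norm_iteratedFDeriv_zero.symm
    _ = ‖iteratedFDeriv ℝ 1 F y‖ := norm_iteratedFDeriv_fderiv

lemma norm_fderiv_eq2 (F : E' → E'') (y : E') :
    ‖fderiv ℝ (fderiv ℝ F) y‖ = ‖iteratedFDeriv ℝ 2 F y‖ :=
  calc ‖fderiv ℝ (fderiv ℝ F) y‖ = ‖iteratedFDeriv ℝ 1 (fderiv ℝ F) y‖ :=
        norm_fderiv_eq1 _ _
    _ = ‖iteratedFDeriv ℝ 2 F y‖ := norm_iteratedFDeriv_fderiv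

lemma norm_fderiv_eq3 (F : E' → E'') (y : E') :
    ‖fderiv ℝ (fderiv ℝ (fderiv ℝ F)) y‖ = ‖iteratedFDeriv ℝ 3 F y‖ :=
  calc ‖fderiv ℝ (fderiv ℝ (fderiv ℝ F)) y‖
      = ‖iteratedFDeriv ℝ 2 (fderiv ℝ F) y‖ := norm_fderiv_eq2 _ _
    _ = ‖iteratedFDeriv ℝ 3 F y‖ := norm_iteratedFDeriv_fderiv
end NormEq

end RoughAux

/-- Bound on the `p/2`-variation of the difference of the rough-regime remainders `J`
and `J̃` associated with two solutions. -/
theorem rough_J_diff_bound (d n N : ℕ) (p : ℝ) (hp1 : 2 ≤ p) (hp2 : p < 3)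
    (f : Fin d → (Fin n → ℝ) → (Fin n → ℝ))
    (hf : ∀ μ, ContDiff ℝ 3 (f μ))
    (hfb : ∀ μ, ∀ j : ℕ, j ≤ 3 → ∃ C : ℝ, ∀ y, ‖iteratedFDeriv ℝ j (f μ) y‖ ≤ C)
    (w w' : ℕ → Fin d → ℝ) (x x' : ℕ → Fin n → ℝ)
    (hstep : ∀ k : ℕ, k < N →
      x (k + 1) = x k + ∑ μ : Fin d, (w (k + 1) μ - w k μ) • f μ (x k))
    (hstep' : ∀ k : ℕ, k < N →
      x' (k + 1) = x' k + ∑ μ : Fin d, (w' (k + 1) μ - w' k μ) • f μ (x' k))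
    (I I' : ℕ → ℕ → Fin n → ℝ)
    (hI : ∀ k l, I k l = x l - x k - ∑ μ : Fin d, (w l μ - w k μ) • f μ (x k))
    (hI' : ∀ k l, I' k l = x' l - x' k - ∑ μ : Fin d, (w' l μ - w' k μ) • f μ (x' k))
    (J J' : Fin d → ℕ → ℕ → Fin n → ℝ)
    (hJ : ∀ μ k l, J μ k l = f μ (x l) - f μ (x k) -
      ∑ ν : Fin d, (w l ν - w k ν) • fderiv ℝ (f μ) (x k) (f ν (x k)))
    (hJ' : ∀ μ k l, J' μ k l = f μ (x' l) - f μ (x' k) -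
      ∑ ν : Fin d, (w' l ν - w' k ν) • fderiv ℝ (f μ) (x' k) (f ν (x' k))) :
    ∀ k l : ℕ, k < l → l ≤ N → ∀ μ : Fin d,
      pVar (p / 2) (fun a b => J μ a b - J' μ a b) k l ≤
        2 ^ (2 - 4 / p) * C3bNormF f *
          (pVar (p / 2) (fun a b => I a b - I' a b) k l +
            ((Finset.Icc 0 l).sup' ⟨0, by simp⟩ fun j => ‖x j - x' j‖) *
              (pVar (p / 2) I' k l + pVarSeq p x' k l ^ 2) +
            pVarSeq p (fun j => x j - x' j) k l *
              (pVarSeq p x k l + pVarSeq p x' k l)) := by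
  intro k l hkl hlN μ
  classical
  have hp0 : (0:ℝ) < p := by linarith
  set q : ℝ := p / 2 with hqdef
  have hq1 : (1:ℝ) ≤ q := by rw [hqdef]; linarith
  have hq0 : (0:ℝ) < q := by linarith
  have h2q : (2:ℝ) * q = p := by rw [hqdef]; ring
  set K : ℝ := C3bNormF f with hKdef
  have hbdd : ∀ (ν : Fin d) (j : ℕ), j ≤ 3 →
      BddAbove (Set.range fun y => ‖iteratedFDeriv ℝ j (f ν) y‖) := by
    intro ν j hj
    obtain ⟨C, hC⟩ := hfb ν j hj
    exact ⟨C, by rintro _ ⟨y, rfl⟩; exact hC y⟩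
  have hsup : ∀ j : ℕ, j ≤ 3 → ∀ y, ‖iteratedFDeriv ℝ j (f μ) y‖ ≤
      ⨆ ν, ⨆ y', ‖iteratedFDeriv ℝ j (f ν) y'‖ := by
    intro j hj y
    refine le_trans (le_ciSup (hbdd μ j hj) y) ?_
    exact le_ciSup (f := fun ν => ⨆ y', ‖iteratedFDeriv ℝ j (f ν) y'‖)
      (Set.Finite.bddAbove (Set.finite_range _)) μ
  have hb1 : ∀ y, ‖fderiv ℝ (f μ) y‖ ≤ K := by
    intro y
    rw [RoughAux.norm_fderiv_eq1]
    exact le_trans (hsup 1 (by norm_num) y) (le_max_left _ _)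
  have hb2 : ∀ y, ‖fderiv ℝ (fderiv ℝ (f μ)) y‖ ≤ K := by
    intro y
    rw [RoughAux.norm_fderiv_eq2]
    exact le_trans (hsup 2 (by norm_num) y) (le_trans (le_max_left _ _) (le_max_right _ _))
  have hb3 : ∀ y, ‖fderiv ℝ (fderiv ℝ (fderiv ℝ (f μ))) y‖ ≤ K := by
    intro y
    rw [RoughAux.norm_fderiv_eq3]
    exact le_trans (hsup 3 (by norm_num) y) (le_trans (le_max_right _ _) (le_max_right _ _))
  have hK : (0:ℝ) ≤ K := le_trans (norm_nonneg _) (hb1 0)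
  set M : ℝ := (Finset.Icc 0 l).sup' ⟨0, by simp⟩ fun j => ‖x j - x' j‖ with hMdef
  have hMj : ∀ j, j ≤ l → ‖x j - x' j‖ ≤ M := by
    intro j hj
    rw [hMdef]
    exact Finset.le_sup' (f := fun j => ‖x j - x' j‖) (Finset.mem_Icc.mpr ⟨Nat.zero_le _, hj⟩)
  have hM0 : (0:ℝ) ≤ M := le_trans (norm_nonneg _) (hMj 0 (Nat.zero_le _))
  -- pointwise estimate
  have hpt : ∀ u v : ℕ, u ≤ l → v ≤ l →
      ‖J μ u v - J' μ u v‖ ≤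
        K * ((‖I u v - I' u v‖ + M * ‖I' u v‖) +
          (M * (‖x' v - x' u‖ * ‖x' v - x' u‖) +
            ‖(x v - x' v) - (x u - x' u)‖ * (‖x v - x u‖ + ‖x' v - x' u‖))) := by
    intro u v hu hv
    have key : J μ u v = (f μ (x v) - f μ (x u) - fderiv ℝ (f μ) (x u) (x v - x u))
        + fderiv ℝ (f μ) (x u) (I u v) := by
      rw [hJ, hI]
      simp only [map_sub, map_sum, map_smul]
      abel
    have key' : J' μ u v = (f μ (x' v) - f μ (x' u) - fderiv ℝ (f μ) (x' u) (x' v - x' u))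
        + fderiv ℝ (f μ) (x' u) (I' u v) := by
      rw [hJ', hI']
      simp only [map_sub, map_sum, map_smul]
      abel
    have hdec : J μ u v - J' μ u v =
        ((f μ (x v) - f μ (x u) - fderiv ℝ (f μ) (x u) (x v - x u))
          - (f μ (x' v) - f μ (x' u) - fderiv ℝ (f μ) (x' u) (x' v - x' u)))
        + (fderiv ℝ (f μ) (x u) (I u v - I' u v)
        + (fderiv ℝ (f μ) (x u) - fderiv ℝ (f μ) (x' u)) (I' u v)) := by
      rw [key, key']
      simp only [map_sub, ContinuousLinearMap.sub_apply]
      abel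
    have hT := RoughAux.taylor_two_diff (hf μ) hb2 hb3 (x u) (x v) (x' u) (x' v)
      (M := M) (hMj u hu) (hMj v hv)
    have h2' : ‖fderiv ℝ (f μ) (x u) (I u v - I' u v)‖ ≤ K * ‖I u v - I' u v‖ :=
      le_trans (ContinuousLinearMap.le_opNorm _ _)
        (mul_le_mul_of_nonneg_right (hb1 _) (norm_nonneg _))
    have h3' : ‖(fderiv ℝ (f μ) (x u) - fderiv ℝ (f μ) (x' u)) (I' u v)‖ ≤
        K * M * ‖I' u v‖ := by
      refine le_trans (ContinuousLinearMap.le_opNorm _ _) ?_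
      refine mul_le_mul_of_nonneg_right ?_ (norm_nonneg _)
      exact le_trans (RoughAux.fderiv_lip (hf μ) hb2 _ _)
        (mul_le_mul_of_nonneg_left (hMj u hu) hK)
    have hdiffeq : ‖(x v - x u) - (x' v - x' u)‖ = ‖(x v - x' v) - (x u - x' u)‖ := by
      congr 1; abel
    rw [hdec]
    rw [hdiffeq] at hT
    calc ‖_ + _‖ ≤ _ := norm_add_le _ _
      _ ≤ (K * (‖(x v - x' v) - (x u - x' u)‖ * (‖x v - x u‖ + ‖x' v - x' u‖))
            + K * M * (‖x' v - x' u‖ * ‖x' v - x' u‖))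
          + (K * ‖I u v - I' u v‖ + K * M * ‖I' u v‖) :=
        add_le_add hT (le_trans (norm_add_le _ _) (add_le_add h2' h3'))
      _ = K * ((‖I u v - I' u v‖ + M * ‖I' u v‖) +
          (M * (‖x' v - x' u‖ * ‖x' v - x' u‖) +
            ‖(x v - x' v) - (x u - x' u)‖ * (‖x v - x u‖ + ‖x' v - x' u‖))) := by ring
  -- target quantities
  set Ta : ℝ := pVar q (fun a b => I a b - I' a b) k l with hTa
  set Tb : ℝ := pVar q I' k l with hTb
  set Sx : ℝ := pVarSeq p x k l with hSx
  set Sx' : ℝ := pVarSeq p x' k l with hSx'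
  set Sd : ℝ := pVarSeq p (fun j => x j - x' j) k l with hSd
  have hTa0 : 0 ≤ Ta := RoughAux.pVar_nonneg _ _ _ _
  have hTb0 : 0 ≤ Tb := RoughAux.pVar_nonneg _ _ _ _
  have hSx0 : 0 ≤ Sx := RoughAux.pVar_nonneg _ _ _ _
  have hSx'0 : 0 ≤ Sx' := RoughAux.pVar_nonneg _ _ _ _
  have hSd0 : 0 ≤ Sd := RoughAux.pVar_nonneg _ _ _ _
  set T : ℝ := (Ta + M * Tb) + (M * Sx' ^ 2 + Sd * (Sx + Sx')) with hTdef
  have hT0 : 0 ≤ T :=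
    add_nonneg (add_nonneg hTa0 (mul_nonneg hM0 hTb0))
      (add_nonneg (mul_nonneg hM0 (sq_nonneg _))
        (mul_nonneg hSd0 (add_nonneg hSx0 hSx'0)))
  -- per-partition bound
  have hpart : ∀ s : List ℕ, IsPart k l s →
      ∑ i ∈ Finset.range (s.length - 1),
        ‖(fun a b => J μ a b - J' μ a b) (s.getD i 0) (s.getD (i+1) 0)‖ ^ q
        ≤ (K * T) ^ q := by
    intro s hs
    obtain ⟨hnd0, hndm, hstepp, hklm⟩ := RoughAux.isPart_facts hs
    have hndl : ∀ i ≤ s.length - 1, s.getD i 0 ≤ l := by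
      intro i hi
      have := RoughAux.nat_step_mono hstepp (s.length - 1) le_rfl i hi
      omega
    set m := s.length - 1 with hm
    set nd : ℕ → ℕ := fun i => s.getD i 0 with hnd
    set a : ℕ → ℝ := fun i => ‖I (nd i) (nd (i+1)) - I' (nd i) (nd (i+1))‖ with ha
    set b : ℕ → ℝ := fun i => M * ‖I' (nd i) (nd (i+1))‖ with hbb
    set c : ℕ → ℝ := fun i =>
      M * (‖x' (nd (i+1)) - x' (nd i)‖ * ‖x' (nd (i+1)) - x' (nd i)‖) with hc
    set dd : ℕ → ℝ := fun i =>
      ‖(x (nd (i+1)) - x' (nd (i+1))) - (x (nd i) - x' (nd i))‖ *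
        (‖x (nd (i+1)) - x (nd i)‖ + ‖x' (nd (i+1)) - x' (nd i)‖) with hdd
    have ha0 : ∀ i ∈ Finset.range m, 0 ≤ a i := fun i _ => norm_nonneg _
    have hb0 : ∀ i ∈ Finset.range m, 0 ≤ b i := fun i _ =>
      mul_nonneg hM0 (norm_nonneg _)
    have hc0 : ∀ i ∈ Finset.range m, 0 ≤ c i := fun i _ =>
      mul_nonneg hM0 (mul_nonneg (norm_nonneg _) (norm_nonneg _))
    have hd0 : ∀ i ∈ Finset.range m, 0 ≤ dd i := fun i _ =>
      mul_nonneg (norm_nonneg _) (add_nonneg (norm_nonneg _) (norm_nonneg _))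
    -- step 1 : termwise pointwise bound
    have step1 : ∑ i ∈ Finset.range m,
        ‖(fun a b => J μ a b - J' μ a b) (nd i) (nd (i+1))‖ ^ q
        ≤ K ^ q * ∑ i ∈ Finset.range m, ((a i + b i) + (c i + dd i)) ^ q := by
      rw [Finset.mul_sum]
      refine Finset.sum_le_sum fun i hi => ?_
      rw [Finset.mem_range] at hi
      have hb := hpt (nd i) (nd (i+1)) (hndl i (by omega)) (hndl (i+1) (by omega))
      calc ‖(fun a b => J μ a b - J' μ a b) (nd i) (nd (i+1))‖ ^ q
          ≤ (K * ((a i + b i) + (c i + dd i))) ^ q :=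
            Real.rpow_le_rpow (norm_nonneg _) hb (le_of_lt hq0)
        _ = K ^ q * ((a i + b i) + (c i + dd i)) ^ q := by
            rw [Real.mul_rpow hK]
            have := add_nonneg (add_nonneg (ha0 i (Finset.mem_range.mpr hi))
              (hb0 i (Finset.mem_range.mpr hi)))
              (add_nonneg (hc0 i (Finset.mem_range.mpr hi)) (hd0 i (Finset.mem_range.mpr hi)))
            exact this
    -- individual variation bounds
    have hSa : (∑ i ∈ Finset.range m, a i ^ q) ^ (1/q) ≤ Ta :=
      RoughAux.sum_rpow_le_pVar hq0 (Ξ := fun a b => I a b - I' a b) hs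
    have hSb : (∑ i ∈ Finset.range m, b i ^ q) ^ (1/q) ≤ M * Tb := by
      have e1 : ∑ i ∈ Finset.range m, b i ^ q
          = M ^ q * ∑ i ∈ Finset.range m, ‖I' (nd i) (nd (i+1))‖ ^ q := by
        rw [Finset.mul_sum]
        exact Finset.sum_congr rfl fun i _ => Real.mul_rpow hM0 (norm_nonneg _)
      rw [e1]
      have hV0 : 0 ≤ ∑ i ∈ Finset.range m, ‖I' (nd i) (nd (i+1))‖ ^ q :=
        Finset.sum_nonneg fun i _ => Real.rpow_nonneg (norm_nonneg _) _
      rw [Real.mul_rpow (Real.rpow_nonneg hM0 _) hV0]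
      rw [← Real.rpow_mul hM0, mul_one_div, div_self (ne_of_gt hq0), Real.rpow_one]
      exact mul_le_mul_of_nonneg_left
        (RoughAux.sum_rpow_le_pVar hq0 (Ξ := I') hs) hM0
    have hSc : (∑ i ∈ Finset.range m, c i ^ q) ^ (1/q) ≤ M * Sx' ^ 2 := by
      have e1 : ∑ i ∈ Finset.range m, c i ^ q
          = M ^ q * ∑ i ∈ Finset.range m, ‖x' (nd (i+1)) - x' (nd i)‖ ^ p := by
        rw [Finset.mul_sum]
        refine Finset.sum_congr rfl fun i _ => ?_
        have e2 : ‖x' (nd (i+1)) - x' (nd i)‖ * ‖x' (nd (i+1)) - x' (nd i)‖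
            = ‖x' (nd (i+1)) - x' (nd i)‖ ^ (2:ℝ) := by
          rw [show (2:ℝ) = ((2:ℕ):ℝ) by norm_num, Real.rpow_natCast, pow_two]
        rw [hc]
        rw [Real.mul_rpow hM0 (by positivity), e2, ← Real.rpow_mul (norm_nonneg _), h2q]
      rw [e1]
      have hV0 : 0 ≤ ∑ i ∈ Finset.range m, ‖x' (nd (i+1)) - x' (nd i)‖ ^ p :=
        Finset.sum_nonneg fun i _ => Real.rpow_nonneg (norm_nonneg _) _
      rw [Real.mul_rpow (Real.rpow_nonneg hM0 _) hV0]
      rw [← Real.rpow_mul hM0, mul_one_div, div_self (ne_of_gt hq0), Real.rpow_one]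
      refine mul_le_mul_of_nonneg_left ?_ hM0
      have hle : ∑ i ∈ Finset.range m, ‖x' (nd (i+1)) - x' (nd i)‖ ^ p
          ≤ pVarSum p (fun a b => x' b - x' a) k l :=
        RoughAux.le_pVarSum (Ξ := fun a b => x' b - x' a) hs
      have e3 : (1:ℝ)/q = (1/p) * 2 := by
        rw [hqdef]; field_simp
      calc (∑ i ∈ Finset.range m, ‖x' (nd (i+1)) - x' (nd i)‖ ^ p) ^ (1/q)
          ≤ (pVarSum p (fun a b => x' b - x' a) k l) ^ (1/q) :=
            Real.rpow_le_rpow hV0 hle (by positivity)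
        _ = Sx' ^ 2 := by
            rw [e3, Real.rpow_mul (RoughAux.pVarSum_nonneg _ _ _ _)]
            rw [show ((2:ℝ)) = ((2:ℕ):ℝ) by norm_num, Real.rpow_natCast]
            rfl
    have hSdd : (∑ i ∈ Finset.range m, dd i ^ q) ^ (1/q) ≤ Sd * (Sx + Sx') := by
      set e : ℕ → ℝ := fun i =>
        ‖(x (nd (i+1)) - x' (nd (i+1))) - (x (nd i) - x' (nd i))‖ with he
      set g : ℕ → ℝ := fun i =>
        ‖x (nd (i+1)) - x (nd i)‖ + ‖x' (nd (i+1)) - x' (nd i)‖ with hg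
      have e1 : ∑ i ∈ Finset.range m, dd i ^ q
          = ∑ i ∈ Finset.range m, (e i ^ q) * (g i ^ q) :=
        Finset.sum_congr rfl fun i _ =>
          Real.mul_rpow (norm_nonneg _) (add_nonneg (norm_nonneg _) (norm_nonneg _))
      have hsq : ∀ i, (e i ^ q) ^ (2:ℕ) = e i ^ p := by
        intro i
        rw [← Real.rpow_natCast (e i ^ q) 2, ← Real.rpow_mul (norm_nonneg _)]
        have : q * ((2:ℕ):ℝ) = p := by push_cast; linarith [h2q]
        rw [this]
      have hsqg : ∀ i, (g i ^ q) ^ (2:ℕ) = g i ^ p := by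
        intro i
        rw [← Real.rpow_natCast (g i ^ q) 2, ← Real.rpow_mul
          (add_nonneg (norm_nonneg _) (norm_nonneg _))]
        have : q * ((2:ℕ):ℝ) = p := by push_cast; linarith [h2q]
        rw [this]
      have hcs : ∑ i ∈ Finset.range m, (e i ^ q) * (g i ^ q)
          ≤ Real.sqrt (∑ i ∈ Finset.range m, e i ^ p) *
            Real.sqrt (∑ i ∈ Finset.range m, g i ^ p) := by
        have := RoughAux.cauchy_schwarz_sum (s := Finset.range m)
          (u := fun i => e i ^ q) (v := fun i => g i ^ q)
          (fun i _ => Real.rpow_nonneg (norm_nonneg _) _)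
          (fun i _ => Real.rpow_nonneg (add_nonneg (norm_nonneg _) (norm_nonneg _)) _)
        refine le_trans this ?_
        rw [show ∑ i ∈ Finset.range m, (e i ^ q) ^ (2:ℕ) = ∑ i ∈ Finset.range m, e i ^ p from
          Finset.sum_congr rfl fun i _ => hsq i]
        rw [show ∑ i ∈ Finset.range m, (g i ^ q) ^ (2:ℕ) = ∑ i ∈ Finset.range m, g i ^ p from
          Finset.sum_congr rfl fun i _ => hsqg i]
      have hVe : ∑ i ∈ Finset.range m, e i ^ p
          ≤ pVarSum p (fun a b => (fun j => x j - x' j) b - (fun j => x j - x' j) a) k l :=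
        RoughAux.le_pVarSum (Ξ := fun a b => (fun j => x j - x' j) b - (fun j => x j - x' j) a) hs
      have hVg : ∑ i ∈ Finset.range m, g i ^ p ≤ (Sx + Sx') ^ p := by
        have hmink := RoughAux.sum_add_rpow_le (by linarith : (1:ℝ) ≤ p) (Finset.range m)
          (fun i => ‖x (nd (i+1)) - x (nd i)‖) (fun i => ‖x' (nd (i+1)) - x' (nd i)‖)
          (fun i _ => norm_nonneg _) (fun i _ => norm_nonneg _)
        refine le_trans hmink ?_
        refine Real.rpow_le_rpow (add_nonneg (Real.rpow_nonneg (Finset.sum_nonneg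
          fun i _ => Real.rpow_nonneg (norm_nonneg _) _) _) (Real.rpow_nonneg
          (Finset.sum_nonneg fun i _ => Real.rpow_nonneg (norm_nonneg _) _) _)) ?_
          (le_of_lt hp0)
        exact add_le_add
          (RoughAux.sum_rpow_le_pVar hp0 (Ξ := fun a b => x b - x a) hs)
          (RoughAux.sum_rpow_le_pVar hp0 (Ξ := fun a b => x' b - x' a) hs)
      have hVe0 : 0 ≤ ∑ i ∈ Finset.range m, e i ^ p :=
        Finset.sum_nonneg fun i _ => Real.rpow_nonneg (norm_nonneg _) _
      have hVg0 : 0 ≤ ∑ i ∈ Finset.range m, g i ^ p :=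
        Finset.sum_nonneg fun i _ => Real.rpow_nonneg
          (add_nonneg (norm_nonneg _) (norm_nonneg _)) _
      have hbound : ∑ i ∈ Finset.range m, dd i ^ q
          ≤ Real.sqrt (pVarSum p (fun a b => (fun j => x j - x' j) b -
              (fun j => x j - x' j) a) k l) * Real.sqrt ((Sx + Sx') ^ p) := by
        rw [e1]
        refine le_trans hcs ?_
        exact mul_le_mul (Real.sqrt_le_sqrt hVe) (Real.sqrt_le_sqrt hVg)
          (Real.sqrt_nonneg _) (Real.sqrt_nonneg _)
      set V : ℝ := pVarSum p (fun a b => (fun j => x j - x' j) b - (fun j => x j - x' j) a) k l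
        with hV
      have hV0 : 0 ≤ V := RoughAux.pVarSum_nonneg _ _ _ _
      have hSxx0 : 0 ≤ Sx + Sx' := add_nonneg hSx0 hSx'0
      calc (∑ i ∈ Finset.range m, dd i ^ q) ^ (1/q)
          ≤ (Real.sqrt V * Real.sqrt ((Sx + Sx') ^ p)) ^ (1/q) :=
            Real.rpow_le_rpow (Finset.sum_nonneg fun i hi =>
              Real.rpow_nonneg (hd0 i hi) _) hbound (by positivity)
        _ = Sd * (Sx + Sx') := by
            rw [Real.sqrt_eq_rpow, Real.sqrt_eq_rpow]
            rw [Real.mul_rpow (Real.rpow_nonneg hV0 _)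
              (Real.rpow_nonneg (Real.rpow_nonneg hSxx0 _) _)]
            have f1 : (V ^ ((1:ℝ)/2)) ^ ((1:ℝ)/q) = Sd := by
              rw [← Real.rpow_mul hV0]
              have : (1:ℝ)/2 * (1/q) = 1/p := by
                rw [hqdef]; field_simp
              rw [this, hSd]
              rfl
            have f2 : (((Sx + Sx') ^ p) ^ ((1:ℝ)/2)) ^ ((1:ℝ)/q) = Sx + Sx' := by
              rw [← Real.rpow_mul (Real.rpow_nonneg hSxx0 _), ← Real.rpow_mul hSxx0]
              have : p * ((1:ℝ)/2 * (1/q)) = 1 := by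
                rw [hqdef]; field_simp
              rw [this, Real.rpow_one]
            rw [f1, f2]
    -- combine the four families
    have step2 : (∑ i ∈ Finset.range m, ((a i + b i) + (c i + dd i)) ^ q) ^ ((1:ℝ)/q) ≤ T := by
      have l1 := RoughAux.Lp_add_le_of_nonneg hq1 (Finset.range m)
        (fun i => a i + b i) (fun i => c i + dd i)
        (fun i hi => add_nonneg (ha0 i hi) (hb0 i hi))
        (fun i hi => add_nonneg (hc0 i hi) (hd0 i hi))
      have l2 := RoughAux.Lp_add_le_of_nonneg hq1 (Finset.range m) a b ha0 hb0
      have l3 := RoughAux.Lp_add_le_of_nonneg hq1 (Finset.range m) c dd hc0 hd0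
      calc (∑ i ∈ Finset.range m, ((a i + b i) + (c i + dd i)) ^ q) ^ ((1:ℝ)/q)
          ≤ (∑ i ∈ Finset.range m, (a i + b i) ^ q) ^ ((1:ℝ)/q)
            + (∑ i ∈ Finset.range m, (c i + dd i) ^ q) ^ ((1:ℝ)/q) := l1
        _ ≤ ((∑ i ∈ Finset.range m, a i ^ q) ^ ((1:ℝ)/q)
              + (∑ i ∈ Finset.range m, b i ^ q) ^ ((1:ℝ)/q))
            + ((∑ i ∈ Finset.range m, c i ^ q) ^ ((1:ℝ)/q)
              + (∑ i ∈ Finset.range m, dd i ^ q) ^ ((1:ℝ)/q)) := add_le_add l2 l3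
        _ ≤ (Ta + M * Tb) + (M * Sx' ^ 2 + Sd * (Sx + Sx')) :=
            add_le_add (add_le_add hSa hSb) (add_le_add hSc hSdd)
        _ = T := by rw [hTdef]
    have step3 : ∑ i ∈ Finset.range m, ((a i + b i) + (c i + dd i)) ^ q ≤ T ^ q :=
      RoughAux.rpow_one_div_le_iff hq0
        (Finset.sum_nonneg fun i hi => Real.rpow_nonneg
          (add_nonneg (add_nonneg (ha0 i hi) (hb0 i hi))
            (add_nonneg (hc0 i hi) (hd0 i hi))) _)
        hT0 step2
    calc ∑ i ∈ Finset.range m,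
          ‖(fun a b => J μ a b - J' μ a b) (nd i) (nd (i+1))‖ ^ q
        ≤ K ^ q * ∑ i ∈ Finset.range m, ((a i + b i) + (c i + dd i)) ^ q := step1
      _ ≤ K ^ q * T ^ q :=
          mul_le_mul_of_nonneg_left step3 (Real.rpow_nonneg hK _)
      _ = (K * T) ^ q := (Real.mul_rpow hK hT0).symm
  -- conclude
  have hfinal : pVar q (fun a b => J μ a b - J' μ a b) k l ≤ K * T :=
    RoughAux.pVar_le hq0 (mul_nonneg hK hT0) hpart
  have h2e : (1:ℝ) ≤ 2 ^ (2 - 4/p) := by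
    have h40 : (0:ℝ) ≤ 2 - 4/p := by
      have : 4/p ≤ 2 := by rw [div_le_iff₀ hp0]; linarith
      linarith
    calc (1:ℝ) = (2:ℝ) ^ (0:ℝ) := (Real.rpow_zero 2).symm
      _ ≤ 2 ^ (2 - 4/p) := Real.rpow_le_rpow_of_exponent_le one_le_two h40
  calc pVar q (fun a b => J μ a b - J' μ a b) k l
      ≤ K * T := hfinal
    _ = 1 * (K * T) := (one_mul _).symm
    _ ≤ (2 ^ (2 - 4/p)) * (K * T) :=
        mul_le_mul_of_nonneg_right h2e (mul_nonneg hK hT0)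
    _ = 2 ^ (2 - 4/p) * K * (Ta + M * (Tb + Sx' ^ 2) + Sd * (Sx + Sx')) := by
        rw [hTdef]; ring
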